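/- arXiv:2202.05120 — 4 statements merged into one kernel-verified Lean document; each statement's English description precedes it below -/
import Mathlib

section
/- For any real matrix A of dimensions n×d, any n×n orthogonal projection matrix P of rank k, any d×d orthogonal projection matrix Q of rank k, and any p ≥ 1, we have ‖A‖_{S_p}^p ≥ ‖P A Q‖_{S_p}^p + ‖(I − P) A (I − Q)‖_{S_p}^p, where ‖·‖_{S_p} denotes the Schatten-p norm. -/
open Matrix BigOperators

/-- The (unsorted) singular values of a real matrix: square roots of the
eigenvalues of `Aᴴ * A`. -/
noncomputable def svU {n d : ℕ} (A : Matrix (Fin n) (Fin d) ℝ) : Fin d → ℝ :=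
  fun j => Real.sqrt ((Matrix.isHermitian_conjTranspose_mul_self A).eigenvalues j)

/-- `sv A i` is the `i`-th largest singular value of `A` (0-indexed). -/
noncomputable def sv {n d : ℕ} (A : Matrix (Fin n) (Fin d) ℝ) (i : Fin d) : ℝ :=
  svU A (Tuple.sort (svU A) i.rev)

/-- `schattenPow p A = ‖A‖_{S_p}^p = ∑ i, σ_i(A)^p`. -/
noncomputable def schattenPow {n d : ℕ} (p : ℝ) (A : Matrix (Fin n) (Fin d) ℝ) : ℝ :=
  ∑ i, sv A i ^ p

/-- The Schatten-`p` norm `‖A‖_{S_p} = (∑ i, σ_i(A)^p)^(1/p)`. -/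
noncomputable def schatten {n d : ℕ} (p : ℝ) (A : Matrix (Fin n) (Fin d) ℝ) : ℝ :=
  (schattenPow p A) ^ (1 / p)

/-- Euclidean norm of a vector. -/
noncomputable def eNorm {n : ℕ} (v : Fin n → ℝ) : ℝ := Real.sqrt (∑ i, v i ^ 2)

/-- Frobenius norm of a matrix. -/
noncomputable def frob {n d : ℕ} (A : Matrix (Fin n) (Fin d) ℝ) : ℝ :=
  Real.sqrt (∑ i, ∑ j, A i j ^ 2)

/-- Operator (spectral) norm: the largest singular value. -/
noncomputable def opNorm {n d : ℕ} (A : Matrix (Fin n) (Fin d) ℝ) : ℝ := ⨆ i, sv A i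


section AuxAll
open Polynomial

section Aux
variable {m : Type*} [Fintype m] [DecidableEq m]

private lemma charpoly_unitary_conj (U D : Matrix m m ℝ) (h1 : U * Uᴴ = 1) :
    (U * D * Uᴴ).charpoly = D.charpoly := by
  have key : charmatrix (U * D * Uᴴ) =
      (C : ℝ →+* ℝ[X]).mapMatrix U * charmatrix D * (C : ℝ →+* ℝ[X]).mapMatrix Uᴴ := by
    simp only [charmatrix, mul_sub, sub_mul]
    congr 1
    · rw [← Matrix.scalar_commute (X : ℝ[X]) (fun r => Commute.all _ _), mul_assoc,
        ← map_mul ((C : ℝ →+* ℝ[X]).mapMatrix), h1,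
        _root_.map_one ((C : ℝ →+* ℝ[X]).mapMatrix), mul_one]
    · rw [← map_mul ((C : ℝ →+* ℝ[X]).mapMatrix), ← map_mul ((C : ℝ →+* ℝ[X]).mapMatrix)]
  rw [Matrix.charpoly, key, det_mul, det_mul, Matrix.charpoly]
  have h2 : ((C : ℝ →+* ℝ[X]).mapMatrix U).det * ((C : ℝ →+* ℝ[X]).mapMatrix Uᴴ).det = 1 := by
    rw [← det_mul, ← map_mul ((C : ℝ →+* ℝ[X]).mapMatrix), h1,
      _root_.map_one ((C : ℝ →+* ℝ[X]).mapMatrix), det_one]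
  calc ((C : ℝ →+* ℝ[X]).mapMatrix U).det * (charmatrix D).det
        * ((C : ℝ →+* ℝ[X]).mapMatrix Uᴴ).det
      = ((C : ℝ →+* ℝ[X]).mapMatrix U).det * ((C : ℝ →+* ℝ[X]).mapMatrix Uᴴ).det
        * (charmatrix D).det := by ring
    _ = (charmatrix D).det := by rw [h2, one_mul]

private lemma charpoly_diagonal' (v : m → ℝ) :
    (Matrix.diagonal v).charpoly = ∏ i, (X - C (v i)) := by
  have h : charmatrix (Matrix.diagonal v) = Matrix.diagonal (fun i => X - C (v i)) := by
    ext i j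
    by_cases h : i = j
    · subst h; simp
    · simp [h, Matrix.diagonal_apply_ne _ h]
  rw [Matrix.charpoly, h, det_diagonal]

private lemma herm_unit1 {H : Matrix m m ℝ} (hH : H.IsHermitian) :
    (hH.eigenvectorUnitary : Matrix m m ℝ) * (hH.eigenvectorUnitary : Matrix m m ℝ)ᴴ = 1 :=
  (Matrix.mem_unitaryGroup_iff).mp (hH.eigenvectorUnitary).2

private lemma herm_unit2 {H : Matrix m m ℝ} (hH : H.IsHermitian) :
    (hH.eigenvectorUnitary : Matrix m m ℝ)ᴴ * (hH.eigenvectorUnitary : Matrix m m ℝ) = 1 :=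
  (Matrix.mem_unitaryGroup_iff').mp (hH.eigenvectorUnitary).2

private lemma herm_decomp {H : Matrix m m ℝ} (hH : H.IsHermitian) :
    H = (hH.eigenvectorUnitary : Matrix m m ℝ) * Matrix.diagonal hH.eigenvalues
      * (hH.eigenvectorUnitary : Matrix m m ℝ)ᴴ := by
  simpa [Matrix.star_eq_conjTranspose] using hH.spectral_theorem

private lemma charpoly_herm {H : Matrix m m ℝ} (hH : H.IsHermitian) :
    H.charpoly = ∏ i, (X - C (hH.eigenvalues i)) := by
  conv_lhs => rw [herm_decomp hH]
  rw [charpoly_unitary_conj _ _ (herm_unit1 hH), charpoly_diagonal']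

private lemma charpoly_herm_sq {H : Matrix m m ℝ} (hH : H.IsHermitian) :
    (H * H).charpoly = ∏ i, (X - C (hH.eigenvalues i ^ 2)) := by
  have hsq : H * H = (hH.eigenvectorUnitary : Matrix m m ℝ)
      * Matrix.diagonal (fun i => hH.eigenvalues i ^ 2)
      * (hH.eigenvectorUnitary : Matrix m m ℝ)ᴴ := by
    conv_lhs => rw [herm_decomp hH]
    rw [show ∀ (a b c e g : Matrix m m ℝ), a*b*c*(a*e*g) = a*b*(c*a)*e*g from
      fun a b c e g => by noncomm_ring, herm_unit2 hH]
    simp [Matrix.mul_assoc, Matrix.diagonal_mul_diagonal, pow_two]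
  rw [hsq, charpoly_unitary_conj _ _ (herm_unit1 hH), charpoly_diagonal']

end Aux


section Aux2
variable {m : Type*} [Fintype m] [DecidableEq m]

private lemma roots_prod_lin (a : m → ℝ) :
    (∏ i, (X - C (a i))).roots = (Finset.univ.val.map a) := by
  rw [Finset.prod_eq_multiset_prod]
  rw [show Finset.univ.val.map (fun i => X - C (a i))
      = (Finset.univ.val.map a).map (fun t => X - C t) by rw [Multiset.map_map]; rfl]
  exact roots_multiset_prod_X_sub_C _

private lemma prod_lin_ne_zero (a : m → ℝ) : (∏ i, (X - C (a i))) ≠ 0 :=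
  (monic_prod_of_monic _ _ (fun i _ => monic_X_sub_C _)).ne_zero

private lemma sum_eq_multiset_map (φ : ℝ → ℝ) (a : m → ℝ) :
    ∑ i, φ (a i) = ((Finset.univ.val.map a).map φ).sum := by
  rw [Multiset.map_map, Finset.sum]
  rfl

end Aux2

-- E1/E2 bridging
private lemma eig_sum_split {m₁ m₂ m₃ : Type*} [Fintype m₁] [DecidableEq m₁]
    [Fintype m₂] [DecidableEq m₂] [Fintype m₃] [DecidableEq m₃]
    {H₁ : Matrix m₁ m₁ ℝ} {H₂ : Matrix m₂ m₂ ℝ} {H₃ : Matrix m₃ m₃ ℝ}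
    (h₁ : H₁.IsHermitian) (h₂ : H₂.IsHermitian) (h₃ : H₃.IsHermitian) (e : ℕ)
    (hch : H₁.charpoly * H₂.charpoly = X ^ e * H₃.charpoly)
    (φ : ℝ → ℝ) (hφ : φ 0 = 0) :
    ∑ i, φ (h₁.eigenvalues i) + ∑ i, φ (h₂.eigenvalues i) = ∑ i, φ (h₃.eigenvalues i) := by
  have hr := congrArg Polynomial.roots hch
  rw [charpoly_herm h₁, charpoly_herm h₂, charpoly_herm h₃] at hr
  rw [Polynomial.roots_mul (mul_ne_zero (prod_lin_ne_zero _) (prod_lin_ne_zero _)),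
    Polynomial.roots_mul (mul_ne_zero (pow_ne_zero _ X_ne_zero) (prod_lin_ne_zero _)),
    Polynomial.roots_pow, Polynomial.roots_X, roots_prod_lin, roots_prod_lin,
    roots_prod_lin, Multiset.nsmul_singleton] at hr
  have := congrArg (fun s : Multiset ℝ => (s.map φ).sum) hr
  simpa [Multiset.map_replicate, Multiset.sum_replicate, hφ,
    ← sum_eq_multiset_map φ h₁.eigenvalues, ← sum_eq_multiset_map φ h₂.eigenvalues,
    ← sum_eq_multiset_map φ h₃.eigenvalues] using this

-- E3 bridging
private lemma eig_sum_shift {m₁ m₂ : Type*} [Fintype m₁] [DecidableEq m₁]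
    [Fintype m₂] [DecidableEq m₂]
    {H₁ : Matrix m₁ m₁ ℝ} {H₂ : Matrix m₂ m₂ ℝ}
    (h₁ : H₁.IsHermitian) (h₂ : H₂.IsHermitian) (e₁ e₂ : ℕ)
    (hch : X ^ e₁ * H₁.charpoly = X ^ e₂ * H₂.charpoly)
    (φ : ℝ → ℝ) (hφ : φ 0 = 0) :
    ∑ i, φ (h₁.eigenvalues i) = ∑ i, φ (h₂.eigenvalues i) := by
  have hr := congrArg Polynomial.roots hch
  rw [charpoly_herm h₁, charpoly_herm h₂] at hr
  rw [Polynomial.roots_mul (mul_ne_zero (pow_ne_zero _ X_ne_zero) (prod_lin_ne_zero _)),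
    Polynomial.roots_mul (mul_ne_zero (pow_ne_zero _ X_ne_zero) (prod_lin_ne_zero _)),
    roots_prod_lin, roots_prod_lin] at hr
  simp only [Polynomial.roots_pow, Polynomial.roots_X, Multiset.nsmul_singleton] at hr
  have := congrArg (fun s : Multiset ℝ => (s.map φ).sum) hr
  simpa [Multiset.map_replicate, Multiset.sum_replicate, hφ,
    ← sum_eq_multiset_map φ h₁.eigenvalues, ← sum_eq_multiset_map φ h₂.eigenvalues] using this

-- E4 bridging
private lemma eig_sum_dilation {m₁ m₂ m₃ : Type*} [Fintype m₁] [DecidableEq m₁]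
    [Fintype m₂] [DecidableEq m₂] [Fintype m₃] [DecidableEq m₃]
    {T : Matrix m₃ m₃ ℝ} {H₁ : Matrix m₁ m₁ ℝ} {H₂ : Matrix m₂ m₂ ℝ}
    (hT : T.IsHermitian) (h₁ : H₁.IsHermitian) (h₂ : H₂.IsHermitian)
    (hch : (T * T).charpoly = H₁.charpoly * H₂.charpoly)
    (φ ψ : ℝ → ℝ) (hcomp : ∀ t, ψ t = φ (t ^ 2)) :
    ∑ i, ψ (hT.eigenvalues i) = ∑ i, φ (h₁.eigenvalues i) + ∑ i, φ (h₂.eigenvalues i) := by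
  have hr := congrArg Polynomial.roots hch
  rw [charpoly_herm_sq hT, charpoly_herm h₁, charpoly_herm h₂,
    Polynomial.roots_mul (mul_ne_zero (prod_lin_ne_zero _) (prod_lin_ne_zero _)),
    roots_prod_lin, roots_prod_lin, roots_prod_lin] at hr
  calc ∑ i, ψ (hT.eigenvalues i) = ∑ i, φ (hT.eigenvalues i ^ 2) := by
        simp only [hcomp]
    _ = ((Finset.univ.val.map (fun i => hT.eigenvalues i ^ 2)).map φ).sum :=
        sum_eq_multiset_map φ _
    _ = ∑ i, φ (h₁.eigenvalues i) + ∑ i, φ (h₂.eigenvalues i) := by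
        rw [hr]
        simp [Multiset.map_add, ← sum_eq_multiset_map φ h₁.eigenvalues,
          ← sum_eq_multiset_map φ h₂.eigenvalues]


section M1sec
variable {m : Type*} [Fintype m] [DecidableEq m]
-- entry of a conjugated diagonal matrix
private lemma conj_diag_entry (G : Matrix m m ℝ) (v : m → ℝ) (i : m) :
    (Gᴴ * Matrix.diagonal v * G) i i = ∑ j, v j * (G j i) ^ 2 := by
  rw [Matrix.mul_assoc]
  simp only [Matrix.mul_apply, Matrix.conjTranspose_apply, star_trivial]
  refine Finset.sum_congr rfl fun j _ => ?_
  rw [Finset.mul_sum, Finset.sum_eq_single j]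
  · rw [Matrix.diagonal_apply_eq]; ring
  · intro b _ hb
    rw [Matrix.diagonal_apply_ne v (Ne.symm hb)]; ring
  · intro h; exact absurd (Finset.mem_univ j) h

private lemma entry_one_diag (M N : Matrix m m ℝ) (h : M * N = 1) (i : m) :
    ∑ j, (M i j) * (N j i) = 1 := by
  have := congrFun (congrFun h i) i
  simpa [Matrix.mul_apply, Matrix.one_apply] using this

-- Jensen step
private lemma jensen_dot (f : ℝ → ℝ) (hf : ConvexOn ℝ Set.univ f) (v c : m → ℝ)
    (hc : ∑ j, (c j) ^ 2 = 1) :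
    f (∑ j, v j * (c j) ^ 2) ≤ ∑ j, (c j) ^ 2 * f (v j) := by
  have := hf.map_sum_le (t := Finset.univ) (w := fun j => (c j) ^ 2) (p := v)
    (fun i _ => sq_nonneg _) hc (fun i _ => Set.mem_univ _)
  simpa [smul_eq_mul, mul_comm] using this

private lemma pinch_trace_le (H K W : Matrix m m ℝ)
    (hH : H.IsHermitian) (hK : K.IsHermitian)
    (hW1 : Wᴴ * W = 1) (hW2 : W * Wᴴ = 1)
    (hrel : K = (2⁻¹ : ℝ) • (H + Wᴴ * H * W))
    (f : ℝ → ℝ) (hf : ConvexOn ℝ Set.univ f) :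
    ∑ i, f (hK.eigenvalues i) ≤ ∑ i, f (hH.eigenvalues i) := by
  set U : Matrix m m ℝ := (hK.eigenvectorUnitary : Matrix m m ℝ) with hU
  set V : Matrix m m ℝ := (hH.eigenvectorUnitary : Matrix m m ℝ) with hV
  have hU1 : U * Uᴴ = 1 := herm_unit1 hK
  have hU2 : Uᴴ * U = 1 := herm_unit2 hK
  have hV1 : V * Vᴴ = 1 := herm_unit1 hH
  have hV2 : Vᴴ * V = 1 := herm_unit2 hH
  set ν : m → ℝ := hH.eigenvalues
  set μ : m → ℝ := hK.eigenvalues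
  -- μ i as diagonal entry
  have hdiagK : Uᴴ * K * U = Matrix.diagonal μ := by
    conv_lhs => rw [herm_decomp hK]
    calc Uᴴ * (U * Matrix.diagonal μ * Uᴴ) * U
        = (Uᴴ * U) * Matrix.diagonal μ * (Uᴴ * U) := by noncomm_ring
      _ = Matrix.diagonal μ := by rw [hU2]; simp
  -- H in terms of V
  have hHdec : H = V * Matrix.diagonal ν * Vᴴ := herm_decomp hH
  -- define the matrices of coefficients
  set M1 : Matrix m m ℝ := Vᴴ * U with hM1
  set M2 : Matrix m m ℝ := Vᴴ * (W * U) with hM2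
  have hGH : ∀ G : Matrix m m ℝ, Gᴴ * H * G = (Vᴴ * G)ᴴ * Matrix.diagonal ν * (Vᴴ * G) := by
    intro G
    rw [hHdec]
    simp only [Matrix.conjTranspose_mul, Matrix.conjTranspose_conjTranspose]
    noncomm_ring
  -- column sums of squares equal 1
  have colsum : ∀ N : Matrix m m ℝ, Nᴴ * N = 1 → ∀ i, ∑ j, (N j i) ^ 2 = 1 := by
    intro N hN i
    have := entry_one_diag Nᴴ N hN i
    simpa [Matrix.conjTranspose_apply, pow_two] using this
  have rowsum : ∀ N : Matrix m m ℝ, N * Nᴴ = 1 → ∀ j, ∑ i, (N j i) ^ 2 = 1 := by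
    intro N hN j
    have := entry_one_diag N Nᴴ hN j
    simpa [Matrix.conjTranspose_apply, pow_two] using this
  have hM1c : M1ᴴ * M1 = 1 := by
    rw [hM1]; simp only [Matrix.conjTranspose_mul, Matrix.conjTranspose_conjTranspose]
    calc Uᴴ * V * (Vᴴ * U) = Uᴴ * (V * Vᴴ) * U := by noncomm_ring
      _ = 1 := by rw [hV1]; simpa using hU2
  have hM1r : M1 * M1ᴴ = 1 := by
    rw [hM1]; simp only [Matrix.conjTranspose_mul, Matrix.conjTranspose_conjTranspose]
    calc Vᴴ * U * (Uᴴ * V) = Vᴴ * (U * Uᴴ) * V := by noncomm_ring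
      _ = 1 := by rw [hU1]; simpa using hV2
  have hWU2 : (W * U)ᴴ * (W * U) = 1 := by
    simp only [Matrix.conjTranspose_mul]
    calc Uᴴ * Wᴴ * (W * U) = Uᴴ * (Wᴴ * W) * U := by noncomm_ring
      _ = 1 := by rw [hW1]; simpa using hU2
  have hWU1 : (W * U) * (W * U)ᴴ = 1 := by
    simp only [Matrix.conjTranspose_mul]
    calc W * U * (Uᴴ * Wᴴ) = W * (U * Uᴴ) * Wᴴ := by noncomm_ring
      _ = 1 := by rw [hU1]; simpa using hW2
  have hM2c : M2ᴴ * M2 = 1 := by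
    rw [hM2]; simp only [Matrix.conjTranspose_mul, Matrix.conjTranspose_conjTranspose]
    calc Uᴴ * Wᴴ * V * (Vᴴ * (W*U)) = (Uᴴ * Wᴴ) * (V * Vᴴ) * (W*U) := by noncomm_ring
      _ = 1 := by
          rw [hV1]
          have := hWU2
          simp only [Matrix.conjTranspose_mul] at this
          simpa using this
  have hM2r : M2 * M2ᴴ = 1 := by
    rw [hM2]; simp only [Matrix.conjTranspose_mul, Matrix.conjTranspose_conjTranspose]
    calc Vᴴ * (W*U) * (Uᴴ * Wᴴ * V) = Vᴴ * ((W*U) * (Uᴴ * Wᴴ)) * V := by noncomm_ring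
      _ = 1 := by
          have := hWU1
          simp only [Matrix.conjTranspose_mul] at this
          rw [this]; simpa using hV2
  -- pointwise bound
  have pt : ∀ i, f (μ i) ≤
      2⁻¹ * (∑ j, (M1 j i) ^ 2 * f (ν j)) + 2⁻¹ * (∑ j, (M2 j i) ^ 2 * f (ν j)) := by
    intro i
    have hμ : μ i = 2⁻¹ * ((Uᴴ * H * U) i i) + 2⁻¹ * ((Uᴴ * (Wᴴ * H * W) * U) i i) := by
      have : (Matrix.diagonal μ) i i = μ i := by simp
      rw [← this, ← hdiagK, hrel]
      simp only [Matrix.smul_mul, Matrix.mul_smul, Matrix.mul_add, Matrix.add_mul]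
      simp [Matrix.smul_apply, Matrix.add_apply, Matrix.mul_assoc]
      ring
    have e1 : (Uᴴ * H * U) i i = ∑ j, ν j * (M1 j i) ^ 2 := by
      rw [hGH U, ← hM1, conj_diag_entry]
    have e2 : (Uᴴ * (Wᴴ * H * W) * U) i i = ∑ j, ν j * (M2 j i) ^ 2 := by
      have : Uᴴ * (Wᴴ * H * W) * U = (W * U)ᴴ * H * (W * U) := by
        simp only [Matrix.conjTranspose_mul]; noncomm_ring
      rw [this, hGH (W * U), ← hM2, conj_diag_entry]
    have b1 : f ((Uᴴ * H * U) i i) ≤ ∑ j, (M1 j i) ^ 2 * f (ν j) := by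
      rw [e1]; exact jensen_dot f hf ν (fun j => M1 j i) (colsum M1 hM1c i)
    have b2 : f ((Uᴴ * (Wᴴ * H * W) * U) i i) ≤ ∑ j, (M2 j i) ^ 2 * f (ν j) := by
      rw [e2]; exact jensen_dot f hf ν (fun j => M2 j i) (colsum M2 hM2c i)
    calc f (μ i) = f (2⁻¹ * ((Uᴴ * H * U) i i) + 2⁻¹ * ((Uᴴ * (Wᴴ * H * W) * U) i i)) := by
          rw [hμ]
      _ ≤ 2⁻¹ * f ((Uᴴ * H * U) i i) + 2⁻¹ * f ((Uᴴ * (Wᴴ * H * W) * U) i i) := by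
          have := hf.2 (Set.mem_univ ((Uᴴ * H * U) i i))
            (Set.mem_univ ((Uᴴ * (Wᴴ * H * W) * U) i i))
            (by norm_num : (0:ℝ) ≤ 2⁻¹) (by norm_num : (0:ℝ) ≤ 2⁻¹) (by norm_num)
          simpa [smul_eq_mul] using this
      _ ≤ _ := by
          have := add_le_add (mul_le_mul_of_nonneg_left b1 (by norm_num : (0:ℝ) ≤ 2⁻¹))
            (mul_le_mul_of_nonneg_left b2 (by norm_num : (0:ℝ) ≤ 2⁻¹))
          exact this
  calc ∑ i, f (μ i)
      ≤ ∑ i, (2⁻¹ * (∑ j, (M1 j i) ^ 2 * f (ν j)) + 2⁻¹ * (∑ j, (M2 j i) ^ 2 * f (ν j))) :=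
        Finset.sum_le_sum (fun i _ => pt i)
    _ = 2⁻¹ * (∑ i, ∑ j, (M1 j i) ^ 2 * f (ν j)) + 2⁻¹ * (∑ i, ∑ j, (M2 j i) ^ 2 * f (ν j)) := by
        rw [Finset.sum_add_distrib, ← Finset.mul_sum, ← Finset.mul_sum]
    _ = ∑ j, f (ν j) := by
        have sw : ∀ N : Matrix m m ℝ, N * Nᴴ = 1 →
            ∑ i, ∑ j, (N j i) ^ 2 * f (ν j) = ∑ j, f (ν j) := by
          intro N hN
          rw [Finset.sum_comm]
          refine Finset.sum_congr rfl fun j _ => ?_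
          rw [← Finset.sum_mul, rowsum N hN j, one_mul]
        rw [sw M1 hM1r, sw M2 hM2r]
        ring

end M1sec

section I

-- I1: disjoint support splitting
private lemma charpoly_split {m : Type*} [Fintype m] [DecidableEq m]
    (X' Y' : Matrix m m ℝ) (h0 : X' * Y' = 0) :
    X'.charpoly * Y'.charpoly = X ^ (Fintype.card m) * (X' + Y').charpoly := by
  have key : charmatrix X' * charmatrix Y'
      = Matrix.scalar m (X : ℝ[X]) * charmatrix (X' + Y') := by
    simp only [charmatrix, mul_sub, sub_mul, map_add]
    rw [← map_mul ((C : ℝ →+* ℝ[X]).mapMatrix), h0, _root_.map_zero ((C : ℝ →+* ℝ[X]).mapMatrix)]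
    rw [← Matrix.scalar_commute (X : ℝ[X]) (fun r => Commute.all _ _)
      ((C : ℝ →+* ℝ[X]).mapMatrix X')]
    noncomm_ring
  have hdet := congrArg Matrix.det key
  rw [det_mul] at hdet
  rw [Matrix.charpoly, Matrix.charpoly, hdet, det_mul, Matrix.charpoly]
  congr 1
  rw [show Matrix.scalar m (X : ℝ[X]) = Matrix.diagonal (fun _ : m => (X : ℝ[X])) from rfl,
    det_diagonal, Finset.prod_const, Finset.card_univ]

private lemma eval_charpoly {m : Type*} [Fintype m] [DecidableEq m]
    (M : Matrix m m ℝ) (x : ℝ) :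
    M.charpoly.eval x = Matrix.det (x • (1 : Matrix m m ℝ) - M) := by
  rw [Matrix.charpoly, ← Polynomial.coe_evalRingHom, RingHom.map_det]
  congr 1
  ext i j
  by_cases h : i = j
  · subst h; simp [charmatrix_apply_eq, Matrix.one_apply]
  · simp [charmatrix_apply_ne _ _ _ h, Matrix.one_apply_ne h, Matrix.smul_apply]

-- I2: AAᴴ vs AᴴA
private lemma charpoly_shift {n d : Type*} [Fintype n] [DecidableEq n] [Fintype d] [DecidableEq d]
    (M : Matrix n d ℝ) :
    X ^ (Fintype.card d) * (M * Mᴴ).charpoly = X ^ (Fintype.card n) * (Mᴴ * M).charpoly := by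
  apply Polynomial.funext
  intro x
  rcases eq_or_ne x 0 with rfl | hx
  · rcases Nat.eq_zero_or_pos (Fintype.card d) with hd | hd <;>
      rcases Nat.eq_zero_or_pos (Fintype.card n) with hn | hn
    · haveI : IsEmpty d := Fintype.card_eq_zero_iff.mp hd
      haveI : IsEmpty n := Fintype.card_eq_zero_iff.mp hn
      simp [hd, hn, Matrix.charpoly, Matrix.det_isEmpty]
    · haveI : IsEmpty d := Fintype.card_eq_zero_iff.mp hd
      haveI : Nonempty n := Fintype.card_pos_iff.mp hn
      have hM : M * Mᴴ = 0 := by ext i j; simp [Matrix.mul_apply]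
      have hz : (0:ℝ) • (1 : Matrix n n ℝ) - M * Mᴴ = 0 := by rw [hM]; simp
      rw [eval_mul, eval_mul, eval_pow, eval_pow, eval_X, hd, pow_zero, zero_pow hn.ne',
        _root_.eval_charpoly (M * Mᴴ), hz, Matrix.det_zero]
      ring
    · haveI : IsEmpty n := Fintype.card_eq_zero_iff.mp hn
      haveI : Nonempty d := Fintype.card_pos_iff.mp hd
      have hM : Mᴴ * M = 0 := by ext i j; simp [Matrix.mul_apply]
      have hz : (0:ℝ) • (1 : Matrix d d ℝ) - Mᴴ * M = 0 := by rw [hM]; simp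
      rw [eval_mul, eval_mul, eval_pow, eval_pow, eval_X, hn, pow_zero, zero_pow hd.ne',
        _root_.eval_charpoly (Mᴴ * M), hz, Matrix.det_zero]
      ring
    · rw [eval_mul, eval_mul, eval_pow, eval_pow, eval_X, zero_pow hd.ne', zero_pow hn.ne']
      ring
  · have h1 : (M * Mᴴ).charpoly.eval x = x ^ (Fintype.card n)
        * Matrix.det (1 - x⁻¹ • (M * Mᴴ)) := by
      rw [_root_.eval_charpoly]
      rw [show x • (1 : Matrix n n ℝ) - M * Mᴴ = x • (1 - x⁻¹ • (M * Mᴴ)) by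
        rw [smul_sub, smul_smul, mul_inv_cancel₀ hx, one_smul]]
      rw [Matrix.det_smul, Fintype.card]
    have h2 : (Mᴴ * M).charpoly.eval x = x ^ (Fintype.card d)
        * Matrix.det (1 - x⁻¹ • (Mᴴ * M)) := by
      rw [_root_.eval_charpoly]
      rw [show x • (1 : Matrix d d ℝ) - Mᴴ * M = x • (1 - x⁻¹ • (Mᴴ * M)) by
        rw [smul_sub, smul_smul, mul_inv_cancel₀ hx, one_smul]]
      rw [Matrix.det_smul, Fintype.card]
    have h3 : Matrix.det (1 - x⁻¹ • (M * Mᴴ)) = Matrix.det (1 - x⁻¹ • (Mᴴ * M)) := by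
      have e1 : (1 : Matrix n n ℝ) - x⁻¹ • (M * Mᴴ) = 1 + M * ((-x⁻¹) • Mᴴ) := by
        rw [Matrix.mul_smul, neg_smul, sub_eq_add_neg]
      have e2 : (1 : Matrix d d ℝ) - x⁻¹ • (Mᴴ * M) = 1 + ((-x⁻¹) • Mᴴ) * M := by
        rw [Matrix.smul_mul, neg_smul, sub_eq_add_neg]
      rw [e1, e2, Matrix.det_one_add_mul_comm]
    simp only [eval_mul, eval_pow, eval_X, h1, h2, h3]
    ring
end I

private lemma convexOn_abs_rpow {p : ℝ} (hp : 1 ≤ p) :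
    ConvexOn ℝ Set.univ (fun t : ℝ => |t| ^ p) := by
  refine ⟨convex_univ, fun x _ y _ a b ha hb hab => ?_⟩
  have h1 : |a • x + b • y| ^ p ≤ (a * |x| + b * |y|) ^ p := by
    apply Real.rpow_le_rpow (abs_nonneg _) _ (le_trans zero_le_one hp)
    calc |a • x + b • y| ≤ |a • x| + |b • y| := abs_add_le _ _
      _ = a * |x| + b * |y| := by
          simp [abs_mul, abs_of_nonneg ha, abs_of_nonneg hb, smul_eq_mul]
  have h2 : (a * |x| + b * |y|) ^ p ≤ a * |x| ^ p + b * |y| ^ p := by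
    have := (convexOn_rpow hp).2 (Set.mem_Ici.mpr (abs_nonneg x))
      (Set.mem_Ici.mpr (abs_nonneg y)) ha hb hab
    simpa [smul_eq_mul] using this
  simpa [smul_eq_mul] using le_trans h1 h2

private lemma abs_rpow_eq_sq_rpow {p : ℝ} (t : ℝ) : |t| ^ p = (t ^ 2) ^ (p / 2) := by
  rw [← sq_abs, ← Real.rpow_natCast |t| 2, ← Real.rpow_mul (abs_nonneg t)]
  congr 1
  push_cast
  ring


private lemma schattenPow_eq_eigsum {n d : ℕ} (p : ℝ) (hp : 1 ≤ p)
    (A : Matrix (Fin n) (Fin d) ℝ) :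
    schattenPow p A
      = ∑ j, ((Matrix.isHermitian_conjTranspose_mul_self A).eigenvalues j) ^ (p / 2) := by
  unfold schattenPow
  have h1 : ∑ i, sv A i ^ p = ∑ j, svU A j ^ p := by
    have := Equiv.sum_comp ((Fin.revPerm).trans (Tuple.sort (svU A)))
      (fun j => svU A j ^ p)
    exact this
  rw [h1]
  refine Finset.sum_congr rfl fun j _ => ?_
  unfold svU
  have hnn : 0 ≤ (Matrix.isHermitian_conjTranspose_mul_self A).eigenvalues j :=
    (Matrix.posSemidef_conjTranspose_mul_self A).eigenvalues_nonneg j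
  rw [Real.sqrt_eq_rpow, ← Real.rpow_mul hnn, one_div, inv_mul_eq_div]

end AuxAll

private lemma realCT {a b : Type*} (M : Matrix a b ℝ) : Mᴴ = Mᵀ := by
  ext i j; simp [Matrix.conjTranspose_apply]

set_option maxHeartbeats 1000000 in
/-- Pinching-type inequality for orthogonal projections:
`‖A‖_{S_p}^p ≥ ‖P A Q‖_{S_p}^p + ‖(I − P) A (I − Q)‖_{S_p}^p`. -/
theorem stmt0 {n d k : ℕ} (A : Matrix (Fin n) (Fin d) ℝ)
    (P : Matrix (Fin n) (Fin n) ℝ) (Q : Matrix (Fin d) (Fin d) ℝ)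
    (hPsymm : P.IsSymm) (hPproj : P * P = P) (hPrank : P.rank = k)
    (hQsymm : Q.IsSymm) (hQproj : Q * Q = Q) (hQrank : Q.rank = k)
    (p : ℝ) (hp : 1 ≤ p) :
    schattenPow p (P * A * Q) + schattenPow p ((1 - P) * A * (1 - Q)) ≤ schattenPow p A := by
  have hpos : (0:ℝ) < p := lt_of_lt_of_le one_pos hp
  set g : ℝ → ℝ := fun s => s ^ (p / 2) with hg
  set f : ℝ → ℝ := fun t => |t| ^ p with hf
  have hg0 : g 0 = 0 := Real.zero_rpow (by positivity)
  have hPT : Pᴴ = P := by rw [realCT]; exact hPsymm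
  have hQT : Qᴴ = Q := by rw [realCT]; exact hQsymm
  set Cm : Matrix (Fin n) (Fin d) ℝ := P * A * Q with hCm
  set Dm : Matrix (Fin n) (Fin d) ℝ := (1 - P) * A * (1 - Q) with hDm
  set B : Matrix (Fin n) (Fin d) ℝ := Cm + Dm with hB
  -- orthogonality facts
  have hQ0 : Q * (1 - Q) = 0 := by rw [Matrix.mul_sub, Matrix.mul_one, hQproj, sub_self]
  have hP0 : Pᴴ * (1 - P) = 0 := by
    rw [hPT, Matrix.mul_sub, Matrix.mul_one, hPproj, sub_self]
  have hDmH : Dmᴴ = (1 - Q) * Aᴴ * (1 - P) := by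
    rw [hDm]
    simp only [Matrix.conjTranspose_mul, Matrix.conjTranspose_sub, Matrix.conjTranspose_one,
      hPT, hQT, Matrix.mul_assoc]
  have hCDH : Cm * Dmᴴ = 0 := by
    rw [hDmH, hCm]
    calc P * A * Q * ((1 - Q) * Aᴴ * (1 - P))
        = P * A * (Q * (1 - Q)) * Aᴴ * (1 - P) := by simp only [Matrix.mul_assoc]
      _ = 0 := by rw [hQ0]; simp
  have hCHD : Cmᴴ * Dm = 0 := by
    rw [hCm, hDm]
    simp only [Matrix.conjTranspose_mul]
    calc Qᴴ * (Aᴴ * Pᴴ)  * ((1 - P) * A * (1 - Q))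
        = Qᴴ * Aᴴ * (Pᴴ * (1 - P)) * A * (1 - Q) := by simp only [Matrix.mul_assoc]
      _ = 0 := by rw [hP0]; simp
  -- column splitting
  have hXY0 : (Cmᴴ * Cm) * (Dmᴴ * Dm) = 0 := by
    calc (Cmᴴ * Cm) * (Dmᴴ * Dm) = Cmᴴ * ((Cm * Dmᴴ) * Dm) := by simp only [Matrix.mul_assoc]
      _ = 0 := by rw [hCDH]; simp
  have hBB : Bᴴ * B = Cmᴴ * Cm + Dmᴴ * Dm := by
    have hDHC : Dmᴴ * Cm = 0 := by
      have h := congrArg Matrix.conjTranspose hCHD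
      simp only [Matrix.conjTranspose_mul, Matrix.conjTranspose_zero,
        Matrix.conjTranspose_conjTranspose] at h
      exact h
    rw [hB]
    simp only [Matrix.conjTranspose_add, Matrix.add_mul, Matrix.mul_add, hCHD, hDHC]
    abel
  have s1 : (∑ i, g ((Matrix.isHermitian_conjTranspose_mul_self Cm).eigenvalues i))
      + (∑ i, g ((Matrix.isHermitian_conjTranspose_mul_self Dm).eigenvalues i))
      = ∑ i, g ((Matrix.isHermitian_conjTranspose_mul_self B).eigenvalues i) := by
    refine eig_sum_split _ _ _ (Fintype.card (Fin d)) ?_ g hg0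
    rw [hBB]
    exact charpoly_split _ _ hXY0
  -- row splitting
  have hXY0' : (Cm * Cmᴴ) * (Dm * Dmᴴ) = 0 := by
    calc (Cm * Cmᴴ) * (Dm * Dmᴴ) = Cm * ((Cmᴴ * Dm) * Dmᴴ) := by simp only [Matrix.mul_assoc]
      _ = 0 := by rw [hCHD]; simp
  have hBB' : B * Bᴴ = Cm * Cmᴴ + Dm * Dmᴴ := by
    have hDCH : Dm * Cmᴴ = 0 := by
      have h := congrArg Matrix.conjTranspose hCDH
      simp only [Matrix.conjTranspose_mul, Matrix.conjTranspose_zero,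
        Matrix.conjTranspose_conjTranspose] at h
      exact h
    rw [hB]
    simp only [Matrix.conjTranspose_add, Matrix.add_mul, Matrix.mul_add, hCDH, hDCH]
    abel
  have s2 : (∑ i, g ((Matrix.isHermitian_mul_conjTranspose_self Cm).eigenvalues i))
      + (∑ i, g ((Matrix.isHermitian_mul_conjTranspose_self Dm).eigenvalues i))
      = ∑ i, g ((Matrix.isHermitian_mul_conjTranspose_self B).eigenvalues i) := by
    refine eig_sum_split _ _ _ (Fintype.card (Fin n)) ?_ g hg0
    rw [hBB']
    exact charpoly_split _ _ hXY0'
  -- row = col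
  have srowcol : ∀ M : Matrix (Fin n) (Fin d) ℝ,
      (∑ i, g ((Matrix.isHermitian_mul_conjTranspose_self M).eigenvalues i))
      = ∑ i, g ((Matrix.isHermitian_conjTranspose_mul_self M).eigenvalues i) := fun M =>
    eig_sum_shift _ _ _ _ (charpoly_shift M) g hg0
  -- dilations
  have dil : ∀ M : Matrix (Fin n) (Fin d) ℝ,
      ∃ hT : (Matrix.fromBlocks 0 M Mᴴ 0 : Matrix (Fin n ⊕ Fin d) (Fin n ⊕ Fin d) ℝ).IsHermitian,
      ∑ i, f (hT.eigenvalues i)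
        = (∑ i, g ((Matrix.isHermitian_mul_conjTranspose_self M).eigenvalues i))
          + ∑ i, g ((Matrix.isHermitian_conjTranspose_mul_self M).eigenvalues i) := by
    intro M
    have hT : (Matrix.fromBlocks 0 M Mᴴ 0 : Matrix (Fin n ⊕ Fin d) (Fin n ⊕ Fin d) ℝ).IsHermitian := by
      unfold Matrix.IsHermitian
      rw [Matrix.fromBlocks_conjTranspose]
      simp
    refine ⟨hT, ?_⟩
    have hsq : (Matrix.fromBlocks 0 M Mᴴ 0 : Matrix (Fin n ⊕ Fin d) (Fin n ⊕ Fin d) ℝ)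
        * Matrix.fromBlocks 0 M Mᴴ 0 = Matrix.fromBlocks (M * Mᴴ) 0 0 (Mᴴ * M) := by
      rw [Matrix.fromBlocks_multiply]
      simp
    refine eig_sum_dilation hT _ _ ?_ g f (fun t => abs_rpow_eq_sq_rpow t)
    rw [hsq, Matrix.charpoly_fromBlocks_zero₁₂]
  obtain ⟨hTA, sA⟩ := dil A
  obtain ⟨hTB, sB⟩ := dil B
  -- pinching
  set WP : Matrix (Fin n) (Fin n) ℝ := P + P - 1 with hWP
  set WQ : Matrix (Fin d) (Fin d) ℝ := Q + Q - 1 with hWQ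
  have hWPH : WPᴴ = WP := by
    rw [hWP]
    simp only [Matrix.conjTranspose_sub, Matrix.conjTranspose_add, Matrix.conjTranspose_one, hPT]
  have hWQH : WQᴴ = WQ := by
    rw [hWQ]
    simp only [Matrix.conjTranspose_sub, Matrix.conjTranspose_add, Matrix.conjTranspose_one, hQT]
  have hWP2 : WP * WP = 1 := by
    rw [hWP, show (P+P-1)*(P+P-1) = (P*P - P) + (P*P - P) + ((P*P - P) + (P*P - P)) + 1 from
      by noncomm_ring, hPproj]
    simp
  have hWQ2 : WQ * WQ = 1 := by
    rw [hWQ, show (Q+Q-1)*(Q+Q-1) = (Q*Q - Q) + (Q*Q - Q) + ((Q*Q - Q) + (Q*Q - Q)) + 1 from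
      by noncomm_ring, hQproj]
    simp
  set W : Matrix (Fin n ⊕ Fin d) (Fin n ⊕ Fin d) ℝ := Matrix.fromBlocks WP 0 0 WQ with hW
  have hWH : Wᴴ = W := by
    rw [hW, Matrix.fromBlocks_conjTranspose]
    simp only [hWPH, hWQH, Matrix.conjTranspose_zero]
  have hWW : W * W = 1 := by
    rw [hW, Matrix.fromBlocks_multiply]
    simp [hWP2, hWQ2, Matrix.fromBlocks_one]
  have h2B : A + WP * A * WQ = B + B := by
    rw [hWP, hWQ, hB, hCm, hDm]
    simp only [Matrix.sub_mul, Matrix.mul_sub, Matrix.add_mul, Matrix.mul_add,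
      Matrix.one_mul, Matrix.mul_one]
    abel
  have h2BH : Aᴴ + WQ * Aᴴ * WP = Bᴴ + Bᴴ := by
    have h := congrArg Matrix.conjTranspose h2B
    simp only [Matrix.conjTranspose_add, Matrix.conjTranspose_mul, hWPH, hWQH] at h
    simp only [Matrix.mul_assoc] at h ⊢
    exact h
  have hrel : (Matrix.fromBlocks 0 B Bᴴ 0 : Matrix (Fin n ⊕ Fin d) (Fin n ⊕ Fin d) ℝ)
      = (2⁻¹ : ℝ) • ((Matrix.fromBlocks 0 A Aᴴ 0 : Matrix (Fin n ⊕ Fin d) (Fin n ⊕ Fin d) ℝ)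
        + Wᴴ * Matrix.fromBlocks 0 A Aᴴ 0 * W) := by
    rw [hWH, hW, Matrix.fromBlocks_multiply, Matrix.fromBlocks_multiply]
    simp only [Matrix.mul_zero, Matrix.zero_mul, Matrix.mul_one, Matrix.one_mul,
      add_zero, zero_add]
    rw [Matrix.fromBlocks_add, Matrix.fromBlocks_smul]
    simp only [add_zero, zero_add, smul_zero]
    rw [h2B, h2BH, show (2⁻¹:ℝ) • (B + B) = B by rw [← two_smul ℝ B, smul_smul]; norm_num,
      show (2⁻¹:ℝ) • (Bᴴ + Bᴴ) = Bᴴ by rw [← two_smul ℝ Bᴴ, smul_smul]; norm_num]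
  have s8 : ∑ i, f (hTB.eigenvalues i) ≤ ∑ i, f (hTA.eigenvalues i) := by
    refine pinch_trace_le _ _ W hTA hTB ?_ ?_ hrel f (convexOn_abs_rpow hp)
    · rw [hWH]; exact hWW
    · rw [hWH]; exact hWW
  -- final assembly
  rw [schattenPow_eq_eigsum p hp, schattenPow_eq_eigsum p hp, schattenPow_eq_eigsum p hp]
  have e1 := srowcol Cm
  have e2 := srowcol Dm
  have e3 := srowcol A
  simp only [hg] at s1 s2 e1 e2 e3 sA sB
  linarith [s1, s2, e1, e2, e3, sA, sB, s8]
end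

section
/- Let A be a symmetric positive semidefinite n×n matrix with 0 ⪯ A ⪯ I, let z be a unit vector, and let p ∈ [1,2]. Then ‖A(I − zz^T)‖_{S_p}^p ≥ ‖A‖_{S_p}^p − ‖Az‖_2^p. -/
open Matrix BigOperators

lemma jensen_rpow {n : ℕ} (r : ℝ) (hr0 : 0 ≤ r) (hr1 : r ≤ 1) (c μ : Fin n → ℝ)
    (hc : ∀ i, 0 ≤ c i) (hμ : ∀ i, 0 ≤ μ i) (hsum : ∑ i, c i = 1) :
    ∑ i, c i * μ i ^ r ≤ (∑ i, c i * μ i) ^ r := by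
  have := (Real.concaveOn_rpow hr0 hr1).le_map_sum (t := Finset.univ)
    (w := c) (p := μ) (fun i _ => hc i) hsum (fun i _ => hμ i)
  simpa [smul_eq_mul] using this

lemma quadform {n : ℕ} {M : Matrix (Fin n) (Fin n) ℝ} (hM : M.IsHermitian)
    (x y : Fin n → ℝ) :
    x ⬝ᵥ M *ᵥ y = ∑ i, hM.eigenvalues i *
      (((star (hM.eigenvectorUnitary : Matrix (Fin n) (Fin n) ℝ)) *ᵥ x) i *
       ((star (hM.eigenvectorUnitary : Matrix (Fin n) (Fin n) ℝ)) *ᵥ y) i) := by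
  set U := (hM.eigenvectorUnitary : Matrix (Fin n) (Fin n) ℝ) with hU
  nth_rewrite 1 [hM.spectral_theorem]
  rw [Unitary.conjStarAlgAut_apply, ← mulVec_mulVec, ← mulVec_mulVec, dotProduct_mulVec]
  have hx : x ᵥ* U = star U *ᵥ x := by
    ext j; simp [vecMul, mulVec, dotProduct, conjTranspose, mul_comm]
  rw [hx]
  simp only [dotProduct, mulVec_diagonal]
  refine Finset.sum_congr rfl fun i _ => ?_
  simp [RCLike.ofReal]
  ring

-- unitary preserves dot product
lemma unitary_dot {n : ℕ} {U : Matrix (Fin n) (Fin n) ℝ} (hU : U * star U = 1)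
    (x y : Fin n → ℝ) : (star U *ᵥ x) ⬝ᵥ (star U *ᵥ y) = x ⬝ᵥ y := by
  rw [dotProduct_mulVec]
  have : (star U *ᵥ x) ᵥ* star U = (star U)ᵀ *ᵥ (star U *ᵥ x) := by
    rw [← mulVec_transpose]
  rw [this, mulVec_mulVec]
  have h2 : (star U)ᵀ * star U = 1 := by
    have : (star U)ᵀ = U := by
      rw [star_eq_conjTranspose]
      ext i j; simp [conjTranspose]
    rw [this, hU]
  rw [h2, one_mulVec]

lemma key {n : ℕ} (B : Matrix (Fin n) (Fin n) ℝ) (hB : B.PosSemidef)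
    (z : Fin n → ℝ) (hz : z ⬝ᵥ z = 1) (r : ℝ) (hr0 : 0 < r) (hr1 : r ≤ 1)
    (C : Matrix (Fin n) (Fin n) ℝ)
    (hCeq : C = (1 - vecMulVec z z) * B * (1 - vecMulVec z z))
    (hC : C.PosSemidef) :
    (∑ i, hB.1.eigenvalues i ^ r) - (z ⬝ᵥ B *ᵥ z) ^ r ≤
      ∑ j, hC.1.eigenvalues j ^ r := by
  classical
  set P : Matrix (Fin n) (Fin n) ℝ := 1 - vecMulVec z z with hP
  have hPsymm : Pᵀ = P := by
    rw [hP, transpose_sub, transpose_one]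
    congr 1
    ext i j
    simp [vecMulVec_apply, mul_comm]
  have hvmv : ∀ x : Fin n → ℝ, vecMulVec z z *ᵥ x = (z ⬝ᵥ x) • z := by
    intro x
    ext i
    simp only [mulVec, vecMulVec_apply, dotProduct, Pi.smul_apply, smul_eq_mul,
      Finset.sum_mul, Finset.mul_sum]
    exact Finset.sum_congr rfl fun k _ => by ring
  have hPmul : ∀ x : Fin n → ℝ, P *ᵥ x = x - (z ⬝ᵥ x) • z := by
    intro x
    rw [hP, sub_mulVec, one_mulVec, hvmv]
  have hswap : ∀ (x t : Fin n → ℝ), x ⬝ᵥ (P *ᵥ t) = (P *ᵥ x) ⬝ᵥ t := by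
    intro x t
    rw [dotProduct_mulVec, ← Matrix.mulVec_transpose, hPsymm]
  have hPz : P *ᵥ z = 0 := by
    rw [hPmul, hz, one_smul, sub_self]
  set U := (hB.1.eigenvectorUnitary : Matrix (Fin n) (Fin n) ℝ) with hUdef
  set W := (hC.1.eigenvectorUnitary : Matrix (Fin n) (Fin n) ℝ) with hWdef
  set μ := hB.1.eigenvalues with hμdef
  set ν := hC.1.eigenvalues with hνdef
  have hUun : U * star U = 1 := Matrix.mem_unitaryGroup_iff.mp hB.1.eigenvectorUnitary.2
  have hWun : W * star W = 1 := Matrix.mem_unitaryGroup_iff.mp hC.1.eigenvectorUnitary.2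
  have hWun' : star W * W = 1 := Matrix.mem_unitaryGroup_iff'.mp hC.1.eigenvectorUnitary.2
  set Q : Matrix (Fin n) (Fin n) ℝ := star U * W with hQdef
  -- eigenvectors of C as plain vectors
  set wv : Fin n → Fin n → ℝ := fun j k => W k j with hwv
  have hwv_eq : ∀ j, wv j = ⇑(hC.1.eigenvectorBasis j) := by
    intro j; ext k; exact hC.1.eigenvectorUnitary_apply k j
  have heig : ∀ j, C *ᵥ wv j = ν j • wv j := by
    intro j; rw [hwv_eq j]; exact hC.1.mulVec_eigenvectorBasis j
  have hQcol : ∀ j, (star U *ᵥ wv j) = fun i => Q i j := by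
    intro j; ext i; simp [hQdef, mulVec, mul_apply, dotProduct, hwv]
  set a : Fin n → ℝ := star U *ᵥ z with ha
  set b : Fin n → ℝ := fun j => z ⬝ᵥ wv j with hb
  have hwnorm : ∀ j, wv j ⬝ᵥ wv j = 1 := by
    intro j
    have := congrFun (congrFun hWun' j) j
    simpa [mul_apply, dotProduct, hwv, one_apply, mul_comm] using this
  -- row sums of Q squared
  have hrow : ∀ i, ∑ j, (Q i j)^2 = 1 := by
    intro i
    have hQQ : Q * star Q = 1 := by
      have hsq : star Q = star W * U := by
        rw [hQdef, StarMul.star_mul, star_star]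
      rw [hsq, hQdef, mul_assoc, ← mul_assoc W, hWun, one_mul]
      exact Matrix.mem_unitaryGroup_iff'.mp hB.1.eigenvectorUnitary.2
    have := congrFun (congrFun hQQ i) i
    simpa [mul_apply, one_apply, sq] using this
  have hcol : ∀ j, ∑ i, (Q i j)^2 = 1 := by
    intro j
    have := unitary_dot hUun (wv j) (wv j)
    rw [hQcol j, hwnorm j] at this
    simpa [dotProduct, sq] using this
  have hasq : ∑ i, (a i)^2 = 1 := by
    have := unitary_dot hUun z z
    rw [hz] at this
    simpa [ha, dotProduct, sq] using this
  have hbsq : ∑ j, (b j)^2 = 1 := by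
    have h1 : ∀ j, b j = (star W *ᵥ z) j := by
      intro j
      simp [hb, hwv, mulVec, dotProduct, star_eq_conjTranspose, conjTranspose, mul_comm]
    have := unitary_dot hWun z z
    rw [hz] at this
    calc ∑ j, (b j)^2 = (star W *ᵥ z) ⬝ᵥ (star W *ᵥ z) := by
          simp [dotProduct, sq, h1]
      _ = 1 := this
  have hμ0 : ∀ i, 0 ≤ μ i := hB.eigenvalues_nonneg
  have hν0 : ∀ j, 0 ≤ ν j := hC.eigenvalues_nonneg
  set F : ℝ := ∑ i, μ i ^ r * (a i)^2 with hF
  have hF0 : 0 ≤ F := Finset.sum_nonneg fun i _ =>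
    mul_nonneg (Real.rpow_nonneg (hμ0 i) r) (sq_nonneg _)
  -- the per-eigenvector claim
  have claim : ∀ j, ∑ i, μ i ^ r * (Q i j)^2 ≤ ν j ^ r + (b j)^2 * F := by
    intro j
    have hqf := quadform hB.1  -- x ⬝ᵥ B *ᵥ y = ...
    have hCwv : wv j ⬝ᵥ C *ᵥ wv j = ν j := by
      rw [heig j, dotProduct_smul, hwnorm j]; simp
    -- u := P *ᵥ wv j, and u ⬝ᵥ B *ᵥ u = ν j
    set u : Fin n → ℝ := P *ᵥ wv j with hu
    have huB : u ⬝ᵥ B *ᵥ u = ν j := by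
      rw [← hCwv, hCeq, ← mulVec_mulVec, ← mulVec_mulVec, hswap, hu]
    have hueq : u = wv j - b j • z := by rw [hu, hPmul]
    by_cases hν : ν j = 0
    · -- zero eigenvalue case
      have hterm : ∀ i, μ i * ((star U *ᵥ u) i)^2 = 0 := by
        have hsum0 : ∑ i, μ i * ((star U *ᵥ u) i * (star U *ᵥ u) i) = 0 := by
          rw [← hqf u u, huB, hν]
        intro i
        have h := Finset.sum_eq_zero_iff_of_nonneg (fun i _ =>
          mul_nonneg (hμ0 i) (mul_self_nonneg _)) |>.mp hsum0 i (Finset.mem_univ i)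
        simpa [sq] using h
      have hUu : star U *ᵥ u = (fun i => Q i j) - b j • a := by
        rw [hueq, mulVec_sub, mulVec_smul, hQcol j, ha]
      have hQba : ∀ i, μ i ^ r * (Q i j)^2 = (b j)^2 * (μ i ^ r * (a i)^2) := by
        intro i
        by_cases hμi : μ i = 0
        · simp [hμi, Real.zero_rpow (ne_of_gt hr0)]
        · have h := hterm i
          have h2 : (star U *ᵥ u) i = 0 := by
            rcases mul_eq_zero.mp h with h | h
            · exact absurd h hμi
            · exact pow_eq_zero_iff (by norm_num) |>.mp h
          have h3 : Q i j = b j * a i := by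
            have := congrFun hUu i
            rw [h2] at this
            have : 0 = Q i j - b j * a i := by simpa [smul_eq_mul] using this
            linarith
          rw [h3]; ring
      rw [hν, Real.zero_rpow (ne_of_gt hr0), zero_add, Finset.mul_sum]
      apply le_of_eq
      refine Finset.sum_congr rfl fun i _ => ?_
      rw [hQba i]
    · -- positive eigenvalue case
      have hνpos : 0 < ν j := lt_of_le_of_ne (hν0 j) (Ne.symm hν)
      have hbj : b j = 0 := by
        have : z ⬝ᵥ C *ᵥ wv j = 0 := by
          rw [hCeq, ← mulVec_mulVec, ← mulVec_mulVec, hswap, hPz, zero_dotProduct]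
        rw [heig j, dotProduct_smul, smul_eq_mul] at this
        have := mul_eq_zero.mp this
        tauto
      have huw : u = wv j := by rw [hueq, hbj, zero_smul, sub_zero]
      have hνsum : ν j = ∑ i, μ i * (Q i j)^2 := by
        rw [← huB, huw, hqf (wv j) (wv j), hQcol j]
        refine Finset.sum_congr rfl fun i _ => by simp [sq]; exact Or.inl rfl
      have hjen : ∑ i, (Q i j)^2 * μ i ^ r ≤ (∑ i, (Q i j)^2 * μ i) ^ r :=
        jensen_rpow r hr0.le hr1 _ μ (fun i => sq_nonneg _) hμ0 (hcol j)
      rw [hbj]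
      have : ∑ i, μ i ^ r * (Q i j)^2 ≤ ν j ^ r := by
        calc ∑ i, μ i ^ r * (Q i j)^2 = ∑ i, (Q i j)^2 * μ i ^ r := by
              refine Finset.sum_congr rfl fun i _ => by ring
          _ ≤ (∑ i, (Q i j)^2 * μ i) ^ r := hjen
          _ = ν j ^ r := by rw [hνsum]; congr 1; exact Finset.sum_congr rfl fun i _ => by ring
      simpa using this
  -- sum up the claims
  have hsumclaim : ∑ i, μ i ^ r - F ≤ ∑ j, ν j ^ r := by
    have h1 : ∑ i, μ i ^ r = ∑ j, ∑ i, μ i ^ r * (Q i j)^2 := by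
      rw [Finset.sum_comm]
      refine Finset.sum_congr rfl fun i _ => ?_
      rw [← Finset.mul_sum, hrow i, mul_one]
    have h2 : ∑ j, (ν j ^ r + (b j)^2 * F) = ∑ j, ν j ^ r + F := by
      rw [Finset.sum_add_distrib, ← Finset.sum_mul, hbsq, one_mul]
    have h3 : ∑ j, ∑ i, μ i ^ r * (Q i j)^2 ≤ ∑ j, (ν j ^ r + (b j)^2 * F) :=
      Finset.sum_le_sum fun j _ => claim j
    rw [h1]; rw [h2] at h3; linarith
  -- F ≤ (z ⬝ᵥ B *ᵥ z) ^ r by Jensen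
  have hFle : F ≤ (z ⬝ᵥ B *ᵥ z) ^ r := by
    have hqf := quadform hB.1 z z
    have : z ⬝ᵥ B *ᵥ z = ∑ i, (a i)^2 * μ i := by
      rw [hqf]; refine Finset.sum_congr rfl fun i _ => by rw [← ha]; ring
    rw [this]
    calc F = ∑ i, (a i)^2 * μ i ^ r := by
          refine Finset.sum_congr rfl fun i _ => by ring
      _ ≤ (∑ i, (a i)^2 * μ i) ^ r :=
          jensen_rpow r hr0.le hr1 _ μ (fun i => sq_nonneg _) hμ0 hasq
  linarith

lemma eig_congr {n : ℕ} {M N : Matrix (Fin n) (Fin n) ℝ} (h : M = N)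
    (hM : M.IsHermitian) (hN : N.IsHermitian) : hM.eigenvalues = hN.eigenvalues := by
  subst h; rfl

lemma schattenPow_eq' {n d : ℕ} (p : ℝ) (M : Matrix (Fin n) (Fin d) ℝ) :
    schattenPow p M =
      ∑ j, ((Matrix.isHermitian_conjTranspose_mul_self M).eigenvalues j) ^ (p/2) := by
  unfold schattenPow sv
  rw [Fintype.sum_equiv (Fin.revPerm.trans (Tuple.sort (svU M)))
    (fun i => svU M ((Tuple.sort (svU M)) i.rev) ^ p) (fun j => svU M j ^ p) (fun i => rfl)]
  refine Finset.sum_congr rfl fun j _ => ?_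
  unfold svU
  have h0 : 0 ≤ (Matrix.isHermitian_conjTranspose_mul_self M).eigenvalues j :=
    (Matrix.posSemidef_conjTranspose_mul_self M).eigenvalues_nonneg j
  rw [Real.sqrt_eq_rpow, ← Real.rpow_mul h0,
    show (1:ℝ)/2*p = p/2 by ring]

/-- For `0 ⪯ A ⪯ I`, a unit vector `z` and `p ∈ [1,2]`,
`‖A(I − zzᵀ)‖_{S_p}^p ≥ ‖A‖_{S_p}^p − ‖Az‖₂^p`. -/
theorem stmt3 {n : ℕ} (A : Matrix (Fin n) (Fin n) ℝ) (hA : A.PosSemidef)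
    (hA1 : (1 - A).PosSemidef) (z : Fin n → ℝ) (hz : eNorm z = 1)
    (p : ℝ) (hp1 : 1 ≤ p) (hp2 : p ≤ 2) :
    schattenPow p A - eNorm (A.mulVec z) ^ p ≤
      schattenPow p (A * (1 - Matrix.vecMulVec z z)) := by
  have hAH : Aᴴ = A := hA.1
  set P : Matrix (Fin n) (Fin n) ℝ := 1 - vecMulVec z z with hPdef
  set B : Matrix (Fin n) (Fin n) ℝ := A * A with hBdef
  have hB : B.PosSemidef := by
    have := Matrix.posSemidef_conjTranspose_mul_self A
    rwa [hAH] at this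
  have hzz : z ⬝ᵥ z = 1 := by
    have h1 : ∑ i, z i ^ 2 = 1 := by
      have h2 : Real.sqrt (∑ i, z i ^ 2) = 1 := hz
      have h3 : 0 ≤ ∑ i, z i ^ 2 := Finset.sum_nonneg fun i _ => sq_nonneg _
      nlinarith [Real.sq_sqrt h3, Real.sqrt_nonneg (∑ i, z i ^ 2)]
    simpa [dotProduct, sq] using h1
  set M : Matrix (Fin n) (Fin n) ℝ := A * P with hMdef
  have hPH : Pᴴ = P := by
    rw [hPdef, conjTranspose_sub, conjTranspose_one]
    congr 1
    ext i j
    simp [conjTranspose_apply, vecMulVec_apply, mul_comm]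
  have hMC : Mᴴ * M = P * B * P := by
    rw [hMdef, conjTranspose_mul, hAH, hPH, hBdef]
    noncomm_ring
  have hC : (P * B * P).PosSemidef := by
    rw [← hMC]; exact Matrix.posSemidef_conjTranspose_mul_self M
  have hr0 : (0:ℝ) < p/2 := by linarith
  have hr1 : p/2 ≤ 1 := by linarith
  have hkey := key B hB z hzz (p/2) hr0 hr1 (P * B * P) rfl hC
  -- rewrite schattenPow p A
  have h1 : schattenPow p A = ∑ i, hB.1.eigenvalues i ^ (p/2) := by
    rw [schattenPow_eq' p A]
    rw [eig_congr (show Aᴴ * A = B by rw [hAH]) (Matrix.isHermitian_conjTranspose_mul_self A) hB.1]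
  have h2 : schattenPow p M = ∑ j, hC.1.eigenvalues j ^ (p/2) := by
    rw [schattenPow_eq' p M]
    rw [eig_congr hMC (Matrix.isHermitian_conjTranspose_mul_self M) hC.1]
  have h3 : eNorm (A.mulVec z) ^ p = (z ⬝ᵥ B *ᵥ z) ^ (p/2) := by
    have hAt : Aᵀ = A := by
      rw [← conjTranspose_eq_transpose_of_trivial, hAH]
    have hs : (A *ᵥ z) ⬝ᵥ (A *ᵥ z) = z ⬝ᵥ B *ᵥ z := by
      rw [hBdef, ← mulVec_mulVec, dotProduct_mulVec, ← mulVec_transpose, hAt]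
      exact dotProduct_comm _ _
    have h0 : (0:ℝ) ≤ ∑ i, (A *ᵥ z) i ^ 2 := Finset.sum_nonneg fun i _ => sq_nonneg _
    have hss : ∑ i, (A *ᵥ z) i ^ 2 = z ⬝ᵥ B *ᵥ z := by
      rw [← hs]; simp [dotProduct, sq]
    unfold eNorm
    rw [Real.sqrt_eq_rpow, ← Real.rpow_mul h0, hss,
      show (1:ℝ)/2*p = p/2 by ring]
  rw [h1, h2, h3]
  exact hkey
end

section
/- Let P and Q be matrices (of the same dimensions) such that the column span of P is orthogonal to the column span of Q and the row span of P is orthogonal to the row span of Q. Then for any p ≥ 2, ‖P‖_{S_p}^p + ‖Q‖_{S_p}^p ≤ ‖P + Q‖_{S_p}^p. -/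
open Matrix BigOperators

open Polynomial

lemma my_charpoly_conj {d : ℕ} (U D V : Matrix (Fin d) (Fin d) ℝ)
    (h1 : U * V = 1) : (U * D * V).charpoly = D.charpoly := by
  have hm : ∀ M N : Matrix (Fin d) (Fin d) ℝ,
      (C : ℝ →+* ℝ[X]).mapMatrix (M * N) =
        (C : ℝ →+* ℝ[X]).mapMatrix M * (C : ℝ →+* ℝ[X]).mapMatrix N := fun M N => map_mul _ _ _
  set mU := (C : ℝ →+* ℝ[X]).mapMatrix U with hmU
  set mV := (C : ℝ →+* ℝ[X]).mapMatrix V with hmV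
  set mD := (C : ℝ →+* ℝ[X]).mapMatrix D with hmD
  have hUV : mU * mV = 1 := by rw [hmU, hmV, ← hm, h1, _root_.map_one]
  have hs : ∀ N : Matrix (Fin d) (Fin d) ℝ[X],
      Matrix.scalar (Fin d) (X : ℝ[X]) * N = N * Matrix.scalar (Fin d) (X : ℝ[X]) :=
    fun N => (Matrix.scalar_commute _ (fun r => Commute.all _ _) N).eq
  have key : charmatrix (U * D * V) = mU * charmatrix D * mV := by
    rw [charmatrix, charmatrix, hm, hm, mul_sub, sub_mul]
    congr 1
    rw [← hs mU, mul_assoc, hUV, mul_one]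
  unfold Matrix.charpoly
  rw [key, det_mul, det_mul]
  have hdet : mU.det * mV.det = 1 := by rw [← det_mul, hUV, det_one]
  calc mU.det * (charmatrix D).det * mV.det
      = (charmatrix D).det * (mU.det * mV.det) := by ring
    _ = (charmatrix D).det := by rw [hdet, mul_one]

lemma my_roots_charpoly {d : ℕ} (A : Matrix (Fin d) (Fin d) ℝ) (hA : A.IsHermitian) :
    A.charpoly.roots = Finset.univ.val.map hA.eigenvalues := by
  have hU1 : (Matrix.IsHermitian.eigenvectorUnitary hA : Matrix (Fin d) (Fin d) ℝ) *
      star (Matrix.IsHermitian.eigenvectorUnitary hA : Matrix (Fin d) (Fin d) ℝ) = 1 :=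
    (Matrix.mem_unitaryGroup_iff).mp (Matrix.IsHermitian.eigenvectorUnitary hA).2
  have hU2 : star (Matrix.IsHermitian.eigenvectorUnitary hA : Matrix (Fin d) (Fin d) ℝ) *
      (Matrix.IsHermitian.eigenvectorUnitary hA : Matrix (Fin d) (Fin d) ℝ) = 1 :=
    mul_eq_one_comm.mp hU1
  have hdiag : (RCLike.ofReal ∘ hA.eigenvalues : Fin d → ℝ) = hA.eigenvalues := by
    funext i; simp
  have h1 : A.charpoly = (Matrix.diagonal hA.eigenvalues).charpoly := by
    conv_lhs => rw [hA.spectral_theorem]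
    rw [hdiag]
    exact my_charpoly_conj _ _ _ hU1
  rw [h1, charpoly_of_upperTriangular _ (Matrix.blockTriangular_diagonal _)]
  simp only [Matrix.diagonal_apply_eq]
  rw [Finset.prod_eq_multiset_prod,
    show (fun x => X - C (hA.eigenvalues x)) = (fun a => X - C a) ∘ hA.eigenvalues from rfl,
    ← Multiset.map_map]
  exact roots_multiset_prod_X_sub_C _

lemma my_charpoly_mul {d : ℕ} (A B : Matrix (Fin d) (Fin d) ℝ) (hAB : A * B = 0) :
    A.charpoly * B.charpoly = X ^ d * (A + B).charpoly := by
  have hs : ∀ N : Matrix (Fin d) (Fin d) ℝ[X],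
      Matrix.scalar (Fin d) (X : ℝ[X]) * N = N * Matrix.scalar (Fin d) (X : ℝ[X]) :=
    fun N => (Matrix.scalar_commute _ (fun r => Commute.all _ _) N).eq
  set mA := (C : ℝ →+* ℝ[X]).mapMatrix A with hmA
  set mB := (C : ℝ →+* ℝ[X]).mapMatrix B with hmB
  have hAB' : mA * mB = 0 := by
    rw [hmA, hmB, ← _root_.map_mul, hAB, _root_.map_zero]
  have key : charmatrix A * charmatrix B =
      Matrix.scalar (Fin d) (X : ℝ[X]) * charmatrix (A + B) := by
    rw [charmatrix, charmatrix, charmatrix, map_add]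
    rw [sub_mul, mul_sub, mul_sub]
    rw [show (C : ℝ →+* ℝ[X]).mapMatrix A * (C : ℝ →+* ℝ[X]).mapMatrix B = 0 from hAB',
      sub_zero, ← hs mA, mul_sub, mul_add]
    abel
  have hdet : (Matrix.scalar (Fin d) (X : ℝ[X])).det = X ^ d := by
    rw [Matrix.scalar_apply, Matrix.det_diagonal, Finset.prod_const, Finset.card_univ,
      Fintype.card_fin]
  unfold Matrix.charpoly
  rw [← Matrix.det_mul, key, Matrix.det_mul, hdet]


lemma my_schattenPow_eq {n d : ℕ} (A : Matrix (Fin n) (Fin d) ℝ) (p : ℝ) :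
    schattenPow p A =
      ((Finset.univ.val.map (Matrix.isHermitian_conjTranspose_mul_self A).eigenvalues).map
        (fun x : ℝ => x ^ (p / 2))).sum := by
  have h1 : schattenPow p A = ∑ j, svU A j ^ p := by
    unfold schattenPow
    exact Fintype.sum_equiv (Fin.revPerm.trans (Tuple.sort (svU A))) _ _ (fun i => rfl)
  rw [h1, Multiset.map_map]
  rw [Finset.sum_eq_multiset_sum]
  congr 1
  apply Multiset.map_congr rfl
  intro j _
  show svU A j ^ p = _
  have hnn : (0:ℝ) ≤ (Matrix.isHermitian_conjTranspose_mul_self A).eigenvalues j :=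
    Matrix.eigenvalues_conjTranspose_mul_self_nonneg A j
  unfold svU
  rw [Real.sqrt_eq_rpow, ← Real.rpow_mul hnn, show (1/2:ℝ)*p = p/2 by ring]
  rfl

/-- Mahler's orthogonal operator inequality: if the column spans of `P` and `Q`
are orthogonal and the row spans of `P` and `Q` are orthogonal, then for `p ≥ 2`,
`‖P‖_{S_p}^p + ‖Q‖_{S_p}^p ≤ ‖P + Q‖_{S_p}^p`. -/
theorem stmt4 {n d : ℕ} (P Q : Matrix (Fin n) (Fin d) ℝ)
    (hcol : Pᵀ * Q = 0) (hrow : P * Qᵀ = 0) (p : ℝ) (hp : 2 ≤ p) :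
    schattenPow p P + schattenPow p Q ≤ schattenPow p (P + Q) := by
  classical
  have hQP : Qᵀ * P = 0 := by
    have h := congrArg Matrix.transpose hcol
    simpa [Matrix.transpose_mul] using h
  set A := Pᵀ * P with hA
  set B := Qᵀ * Q with hB
  have hM : (P + Q)ᵀ * (P + Q) = A + B := by
    rw [Matrix.transpose_add, Matrix.add_mul, Matrix.mul_add, Matrix.mul_add, hcol, hQP,
      add_zero, zero_add]
  have hABz : A * B = 0 := by
    rw [hA, hB, Matrix.mul_assoc, ← Matrix.mul_assoc P Qᵀ Q, hrow, Matrix.zero_mul,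
      Matrix.mul_zero]
  have hhA : A.IsHermitian := Matrix.isHermitian_conjTranspose_mul_self P
  have hhB : B.IsHermitian := Matrix.isHermitian_conjTranspose_mul_self Q
  have hhM : ((P + Q)ᵀ * (P + Q)).IsHermitian := Matrix.isHermitian_conjTranspose_mul_self (P + Q)
  have hkey : A.charpoly * B.charpoly =
      Polynomial.X ^ d * ((P + Q)ᵀ * (P + Q)).charpoly := by
    rw [hM]; exact my_charpoly_mul A B hABz
  have hroots := congrArg Polynomial.roots hkey
  rw [Polynomial.roots_mul (mul_ne_zero (Matrix.charpoly_monic A).ne_zero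
        (Matrix.charpoly_monic B).ne_zero),
    Polynomial.roots_mul (mul_ne_zero (pow_ne_zero d Polynomial.X_ne_zero)
        (Matrix.charpoly_monic _).ne_zero),
    Polynomial.roots_pow, Polynomial.roots_X, Multiset.nsmul_singleton,
    my_roots_charpoly A hhA, my_roots_charpoly B hhB,
    my_roots_charpoly _ hhM] at hroots
  have hsum := congrArg (fun s : Multiset ℝ => (s.map (fun x : ℝ => x ^ (p / 2))).sum) hroots
  simp only [Multiset.map_add, Multiset.sum_add, Multiset.map_replicate] at hsum
  have hz : (0:ℝ) ^ (p / 2) = 0 := Real.zero_rpow (by positivity)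
  rw [hz, Multiset.sum_replicate, smul_zero, zero_add] at hsum
  rw [my_schattenPow_eq P p, my_schattenPow_eq Q p, my_schattenPow_eq (P + Q) p]
  exact le_of_eq hsum
end

section
/- Let A be an n×d matrix with SVD A = UΣV^T, k ∈ [d], ℓ ∈ [k], ε ∈ (0,1), and suppose (σ_ℓ − σ_{ℓ+1})/σ_ℓ ≥ ε/d and σ_ℓ > 0. Let w₁,...,w_ℓ ∈ ℝ^n be orthonormal vectors such that ‖A^T w_i‖₂² ≥ σ_i² − δ·σ_{k+1}² for all i ∈ [ℓ], where δ > 0. Let W = [w₁|...|w_ℓ]. Then ‖A_ℓ^T(I − WW^T)‖_F² ≤ ℓ·δ·σ_{k+1}² / (1 − (σ_{ℓ+1}/σ_ℓ)²), where A_ℓ is the best rank-ℓ approximation to A. -/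
open Matrix BigOperators

lemma frobSq {n d : ℕ} (M : Matrix (Fin n) (Fin d) ℝ) :
    frob M ^ 2 = Matrix.trace (Mᵀ * M) := by
  unfold frob
  rw [Real.sq_sqrt (by positivity)]
  simp only [Matrix.trace, Matrix.diag, Matrix.mul_apply, Matrix.transpose_apply]
  rw [Finset.sum_comm]
  simp [sq]

lemma diagEntry_nonneg {n d : ℕ} (N : Matrix (Fin n) (Fin d) ℝ) (j : Fin d) :
    0 ≤ (Nᵀ * N) j j := by
  simp only [Matrix.mul_apply, Matrix.transpose_apply]
  exact Finset.sum_nonneg fun i _ => mul_self_nonneg _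

lemma traceDiagMul {d : ℕ} (v : Fin d → ℝ) (X : Matrix (Fin d) (Fin d) ℝ) :
    Matrix.trace (Matrix.diagonal v * X) = ∑ j, v j * X j j := by
  simp [Matrix.trace, Matrix.diag, Matrix.mul_apply, Matrix.diagonal]

lemma traceUDUt {n d : ℕ} (U : Matrix (Fin n) (Fin d) ℝ) (hU : Uᵀ * U = 1)
    (v : Fin d → ℝ) :
    Matrix.trace (U * Matrix.diagonal v * Uᵀ) = ∑ j, v j := by
  rw [Matrix.trace_mul_comm, ← Matrix.mul_assoc, hU, Matrix.one_mul, Matrix.trace_diagonal]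

lemma traceUDUtP {n d ℓ : ℕ} (U : Matrix (Fin n) (Fin d) ℝ) (W : Matrix (Fin n) (Fin ℓ) ℝ)
    (v : Fin d → ℝ) :
    Matrix.trace (U * Matrix.diagonal v * Uᵀ * (W * Wᵀ)) =
      ∑ j, v j * ∑ i, ((Uᵀ * W) j i) ^ 2 := by
  have h1 : U * Matrix.diagonal v * Uᵀ * (W * Wᵀ) =
      U * (Matrix.diagonal v * (Uᵀ * (W * Wᵀ))) := by
    simp only [Matrix.mul_assoc]
  rw [h1, Matrix.trace_mul_comm]
  have h2 : Matrix.diagonal v * (Uᵀ * (W * Wᵀ)) * U =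
      Matrix.diagonal v * ((Uᵀ * W) * (Uᵀ * W)ᵀ) := by
    simp only [Matrix.transpose_mul, Matrix.transpose_transpose, Matrix.mul_assoc]
  rw [h2, traceDiagMul]
  congr 1; funext j; congr 1
  simp only [Matrix.mul_apply, Matrix.transpose_apply, sq]

lemma sum_if_lt {d ℓ : ℕ} (h : ℓ ≤ d) (f : ℕ → ℝ) :
    ∑ j : Fin d, (if (j : ℕ) < ℓ then f j else 0) = ∑ i : Fin ℓ, f i := by
  rw [Fin.sum_univ_eq_sum_range (fun m => if m < ℓ then f m else 0),
    Fin.sum_univ_eq_sum_range f]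
  rw [← Finset.sum_subset (Finset.range_subset_range.2 h)
    (fun x _ hx => by simp [Finset.mem_range.not.1 hx])]
  exact Finset.sum_congr rfl fun x hx => if_pos (Finset.mem_range.1 hx)

set_option maxHeartbeats 2000000 in
/-- High-accuracy per-vector guarantee to residual cost: bound on
`‖A_ℓᵀ (I − WWᵀ)‖_F²`. Indices: the 1-indexed `σ_ℓ`, `σ_{ℓ+1}`, `σ_{k+1}` are the
0-indexed `σ ⟨ℓ-1,_⟩`, `σ ⟨ℓ,_⟩`, `σ ⟨k,_⟩`. -/
theorem stmt16 {n d : ℕ} (A U : Matrix (Fin n) (Fin d) ℝ) (V : Matrix (Fin d) (Fin d) ℝ)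
    (σ : Fin d → ℝ) (hU : Uᵀ * U = 1) (hV : Vᵀ * V = 1)
    (hσmono : Antitone σ) (hσpos : ∀ i, 0 ≤ σ i)
    (hA : A = U * Matrix.diagonal σ * Vᵀ)
    (k ℓ : ℕ) (hk1 : 1 ≤ k) (hk : k < d) (hℓ1 : 1 ≤ ℓ) (hℓk : ℓ ≤ k)
    (ε : ℝ) (hε0 : 0 < ε) (hε1 : ε < 1)
    (hσℓ : 0 < σ ⟨ℓ - 1, by omega⟩)
    (hgap : ε / d ≤ (σ ⟨ℓ - 1, by omega⟩ - σ ⟨ℓ, by omega⟩) / σ ⟨ℓ - 1, by omega⟩)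
    (δ : ℝ) (hδ : 0 < δ)
    (W : Matrix (Fin n) (Fin ℓ) ℝ) (hW : Wᵀ * W = 1)
    (hpv : ∀ i : Fin ℓ,
      σ (Fin.castLE (by omega) i) ^ 2 - δ * σ ⟨k, hk⟩ ^ 2 ≤ ∑ j, ((Aᵀ * W) j i) ^ 2)
    (Aℓ : Matrix (Fin n) (Fin d) ℝ)
    (hAℓ : Aℓ = U * Matrix.diagonal (fun i : Fin d => if (i : ℕ) < ℓ then σ i else 0) * Vᵀ) :
    frob (Aℓᵀ * (1 - W * Wᵀ)) ^ 2 ≤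
      ℓ * δ * σ ⟨k, hk⟩ ^ 2 / (1 - (σ ⟨ℓ, by omega⟩ / σ ⟨ℓ - 1, by omega⟩) ^ 2) := by
  have hℓd : ℓ ≤ d := le_trans hℓk (le_of_lt hk)
  set t : ℝ := σ ⟨ℓ - 1, by omega⟩ with htdef
  set sl : ℝ := σ ⟨ℓ, by omega⟩ with hsldef
  set σk : ℝ := σ ⟨k, hk⟩ with hσkdef
  clear_value t sl σk
  -- the key existence of the overlap coefficients c
  have hex : ∃ c : Fin d → ℝ, (∀ j, 0 ≤ c j) ∧ (∀ j, c j ≤ 1) ∧ (∑ j, c j ≤ (ℓ : ℝ)) ∧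
      (frob (Aℓᵀ * (1 - W * Wᵀ)) ^ 2 =
        ∑ j : Fin d, (if (j : ℕ) < ℓ then σ j ^ 2 else 0) * (1 - c j)) ∧
      (∑ i : Fin ℓ, ∑ j, ((Aᵀ * W) j i) ^ 2 = ∑ j, σ j ^ 2 * c j) := by
    have hPP : (W * Wᵀ) * (W * Wᵀ) = W * Wᵀ := by
      rw [Matrix.mul_assoc, ← Matrix.mul_assoc Wᵀ W Wᵀ, hW, Matrix.one_mul]
    have hPsym : (W * Wᵀ)ᵀ = W * Wᵀ := by
      rw [Matrix.transpose_mul, Matrix.transpose_transpose]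
    have hQsym : (1 - W * Wᵀ)ᵀ = 1 - W * Wᵀ := by
      rw [Matrix.transpose_sub, Matrix.transpose_one, hPsym]
    have hQQ : (1 - W * Wᵀ) * (1 - W * Wᵀ) = 1 - W * Wᵀ := by
      rw [Matrix.sub_mul, Matrix.one_mul, Matrix.mul_sub, Matrix.mul_one, hPP]
      abel
    have hBB : ∀ j, ((Uᵀ * W) * (Uᵀ * W)ᵀ) j j = ∑ i, ((Uᵀ * W) j i) ^ 2 := by
      intro j
      simp only [Matrix.mul_apply, Matrix.transpose_apply, sq]
    -- c j ≤ 1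
    have hm1 : ((1 - W * Wᵀ) * U)ᵀ * ((1 - W * Wᵀ) * U) = 1 - (Uᵀ * W) * (Uᵀ * W)ᵀ := by
      rw [Matrix.transpose_mul, hQsym, Matrix.mul_assoc,
        ← Matrix.mul_assoc (1 - W * Wᵀ) (1 - W * Wᵀ) U, hQQ]
      rw [Matrix.sub_mul, Matrix.one_mul, Matrix.mul_sub, hU]
      congr 1
      rw [Matrix.transpose_mul, Matrix.transpose_transpose]
      simp only [Matrix.mul_assoc]
    have hc1' : ∀ j, (∑ i, ((Uᵀ * W) j i) ^ 2) ≤ 1 := by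
      intro j
      have h0 := diagEntry_nonneg ((1 - W * Wᵀ) * U) j
      rw [hm1] at h0
      have h1 : ((1 - (Uᵀ * W) * (Uᵀ * W)ᵀ : Matrix (Fin d) (Fin d) ℝ)) j j
          = 1 - ∑ i, ((Uᵀ * W) j i) ^ 2 := by
        rw [Matrix.sub_apply, hBB j, Matrix.one_apply_eq]
      rw [h1] at h0
      linarith
    -- sum of c ≤ ℓ
    have hUUt : (U * Uᵀ) * (U * Uᵀ) = U * Uᵀ := by
      rw [Matrix.mul_assoc, ← Matrix.mul_assoc Uᵀ U Uᵀ, hU, Matrix.one_mul]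
    have hRsym : (1 - U * Uᵀ)ᵀ = 1 - U * Uᵀ := by
      rw [Matrix.transpose_sub, Matrix.transpose_one, Matrix.transpose_mul,
        Matrix.transpose_transpose]
    have hRR : (1 - U * Uᵀ) * (1 - U * Uᵀ) = 1 - U * Uᵀ := by
      rw [Matrix.sub_mul, Matrix.one_mul, Matrix.mul_sub, Matrix.mul_one, hUUt]
      abel
    have hm2 : ((1 - U * Uᵀ) * W)ᵀ * ((1 - U * Uᵀ) * W) = 1 - (Uᵀ * W)ᵀ * (Uᵀ * W) := by
      rw [Matrix.transpose_mul, hRsym, Matrix.mul_assoc,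
        ← Matrix.mul_assoc (1 - U * Uᵀ) (1 - U * Uᵀ) W, hRR]
      rw [Matrix.sub_mul, Matrix.one_mul, Matrix.mul_sub, hW]
      congr 1
      rw [Matrix.transpose_mul, Matrix.transpose_transpose]
      simp only [Matrix.mul_assoc]
    have hsum : ∑ j : Fin d, ∑ i, ((Uᵀ * W) j i) ^ 2 ≤ (ℓ : ℝ) := by
      have h0 : 0 ≤ Matrix.trace (((1 - U * Uᵀ) * W)ᵀ * ((1 - U * Uᵀ) * W)) :=
        Finset.sum_nonneg fun i _ => diagEntry_nonneg _ i
      rw [hm2, Matrix.trace_sub, Matrix.trace_one] at h0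
      have htr : Matrix.trace ((Uᵀ * W)ᵀ * (Uᵀ * W))
          = ∑ j : Fin d, ∑ i, ((Uᵀ * W) j i) ^ 2 := by
        simp only [Matrix.trace, Matrix.diag, Matrix.mul_apply, Matrix.transpose_apply, sq]
        rw [Finset.sum_comm]
      rw [htr] at h0
      simp only [Fintype.card_fin] at h0
      linarith
    -- Frobenius formula
    have hAl : Aℓ * Aℓᵀ = U * Matrix.diagonal
        (fun j : Fin d => (if (j : ℕ) < ℓ then σ j else 0) * (if (j : ℕ) < ℓ then σ j else 0)) * Uᵀ := by
      rw [hAℓ]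
      simp only [Matrix.transpose_mul, Matrix.transpose_transpose, Matrix.diagonal_transpose,
        Matrix.mul_assoc]
      rw [← Matrix.mul_assoc Vᵀ V, hV, Matrix.one_mul,
        ← Matrix.mul_assoc (Matrix.diagonal fun i : Fin d => if (i : ℕ) < ℓ then σ i else 0)
          (Matrix.diagonal fun i : Fin d => if (i : ℕ) < ℓ then σ i else 0) Uᵀ,
        Matrix.diagonal_mul_diagonal, ← Matrix.mul_assoc]
    have hfr : frob (Aℓᵀ * (1 - W * Wᵀ)) ^ 2
        = ∑ j : Fin d, (if (j : ℕ) < ℓ then σ j ^ 2 else 0)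
            * (1 - ∑ i, ((Uᵀ * W) j i) ^ 2) := by
      rw [frobSq]
      have h1 : (Aℓᵀ * (1 - W * Wᵀ))ᵀ * (Aℓᵀ * (1 - W * Wᵀ))
          = (1 - W * Wᵀ) * (Aℓ * (Aℓᵀ * (1 - W * Wᵀ))) := by
        rw [Matrix.transpose_mul, hQsym, Matrix.transpose_transpose, Matrix.mul_assoc]
      rw [h1, Matrix.trace_mul_comm]
      have h2 : Aℓ * (Aℓᵀ * (1 - W * Wᵀ)) * (1 - W * Wᵀ) = Aℓ * Aℓᵀ * (1 - W * Wᵀ) := by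
        simp only [Matrix.mul_assoc]
        rw [hQQ]
      rw [h2, hAl, Matrix.mul_sub, Matrix.mul_one, Matrix.trace_sub, traceUDUt U hU,
        traceUDUtP U W]
      rw [← Finset.sum_sub_distrib]
      refine Finset.sum_congr rfl fun j _ => ?_
      split_ifs with h <;> ring
    -- energy formula
    have hAAt : A * Aᵀ = U * Matrix.diagonal (fun j => σ j * σ j) * Uᵀ := by
      rw [hA]
      simp only [Matrix.transpose_mul, Matrix.transpose_transpose, Matrix.diagonal_transpose,
        Matrix.mul_assoc]
      rw [← Matrix.mul_assoc Vᵀ V, hV, Matrix.one_mul,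
        ← Matrix.mul_assoc (Matrix.diagonal σ) (Matrix.diagonal σ) Uᵀ,
        Matrix.diagonal_mul_diagonal, ← Matrix.mul_assoc]
    have hg5 : ∑ i : Fin ℓ, ∑ j : Fin d, ((Aᵀ * W) j i) ^ 2
        = ∑ j : Fin d, σ j ^ 2 * ∑ i, ((Uᵀ * W) j i) ^ 2 := by
      have htr : ∑ i : Fin ℓ, ∑ j : Fin d, ((Aᵀ * W) j i) ^ 2
          = Matrix.trace ((Aᵀ * W)ᵀ * (Aᵀ * W)) := by
        simp only [Matrix.trace, Matrix.diag, Matrix.mul_apply, Matrix.transpose_apply, sq]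
      rw [htr]
      have h1 : (Aᵀ * W)ᵀ * (Aᵀ * W) = Wᵀ * (A * Aᵀ * W) := by
        rw [Matrix.transpose_mul, Matrix.transpose_transpose]
        simp only [Matrix.mul_assoc]
      rw [h1, Matrix.trace_mul_comm, Matrix.mul_assoc, hAAt, traceUDUtP U W]
      refine Finset.sum_congr rfl fun j _ => ?_
      show σ j * σ j * _ = σ j ^ 2 * _
      rw [sq]
    exact ⟨fun j => ∑ i, ((Uᵀ * W) j i) ^ 2,
      fun j => Finset.sum_nonneg fun i _ => sq_nonneg _, hc1', hsum, hfr, hg5⟩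
  obtain ⟨c, hc0, hc1, hsumc, hLHS, hAW⟩ := hex
  rw [hLHS]
  -- basic positivity facts
  have hd' : (0 : ℝ) < d := by exact_mod_cast Nat.pos_of_ne_zero (by omega)
  have hts : sl < t := by
    have h1 : ε / d * t ≤ (t - sl) / t * t := mul_le_mul_of_nonneg_right hgap (le_of_lt hσℓ)
    rw [div_mul_cancel₀ _ (ne_of_gt hσℓ)] at h1
    nlinarith [div_pos hε0 hd']
  have hsl0 : 0 ≤ sl := by rw [hsldef]; exact hσpos _
  have hC0 : 0 < t ^ 2 - sl ^ 2 := by nlinarith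
  have hden : 0 < 1 - (sl / t) ^ 2 := by
    have h1 : sl / t < 1 := (div_lt_one hσℓ).2 hts
    have h2 : 0 ≤ sl / t := div_nonneg hsl0 (le_of_lt hσℓ)
    nlinarith
  -- head sums reindexing
  have hhead : ∑ j : Fin d, (if (j : ℕ) < ℓ then σ j ^ 2 else 0)
      = ∑ i : Fin ℓ, σ (Fin.castLE hℓd i) ^ 2 := by
    calc ∑ j : Fin d, (if (j : ℕ) < ℓ then σ j ^ 2 else 0)
        = ∑ j : Fin d, (if (j : ℕ) < ℓ then
            (if h : (j : ℕ) < d then σ ⟨(j : ℕ), h⟩ ^ 2 else 0) else 0) :=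
          Finset.sum_congr rfl fun j _ => by simp [j.isLt]
      _ = ∑ i : Fin ℓ, (if h : (i : ℕ) < d then σ ⟨(i : ℕ), h⟩ ^ 2 else 0) :=
          sum_if_lt hℓd (fun m => if h : m < d then σ ⟨m, h⟩ ^ 2 else 0)
      _ = ∑ i : Fin ℓ, σ (Fin.castLE hℓd i) ^ 2 :=
          Finset.sum_congr rfl fun i _ => by
            rw [dif_pos (Nat.lt_of_lt_of_le i.isLt hℓd)]
            rfl
  have hone : ∑ j : Fin d, (if (j : ℕ) < ℓ then (1 : ℝ) else 0) = (ℓ : ℝ) := by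
    simpa using sum_if_lt hℓd (fun _ => (1 : ℝ))
  -- per-vector guarantee summed
  have hF1 : (∑ j : Fin d, (if (j : ℕ) < ℓ then σ j ^ 2 else 0)) - ℓ * δ * σk ^ 2
      ≤ ∑ j, σ j ^ 2 * c j := by
    rw [← hAW, hhead]
    have h := Finset.sum_le_sum (fun i (_ : i ∈ Finset.univ) => hpv i)
    rw [Finset.sum_sub_distrib, Finset.sum_const, Finset.card_univ, Fintype.card_fin,
      nsmul_eq_mul] at h
    have hcast : ∀ i : Fin ℓ, σ (Fin.castLE (by omega : ℓ ≤ d) i) = σ (Fin.castLE hℓd i) :=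
      fun i => rfl
    calc (∑ i : Fin ℓ, σ (Fin.castLE hℓd i) ^ 2) - ↑ℓ * δ * σk ^ 2
        = (∑ i : Fin ℓ, σ (Fin.castLE (by omega : ℓ ≤ d) i) ^ 2) - ↑ℓ * (δ * σk ^ 2) := by
          ring
      _ ≤ _ := h
  -- sum splittings
  have e2 : ∑ j, σ j ^ 2 * c j
      = (∑ j : Fin d, (if (j : ℕ) < ℓ then σ j ^ 2 * c j else 0))
        + ∑ j : Fin d, (if (j : ℕ) < ℓ then 0 else σ j ^ 2 * c j) := by
    rw [← Finset.sum_add_distrib]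
    exact Finset.sum_congr rfl fun j _ => by split_ifs <;> ring
  have e3 : ∑ j, c j
      = (∑ j : Fin d, (if (j : ℕ) < ℓ then c j else 0))
        + ∑ j : Fin d, (if (j : ℕ) < ℓ then 0 else c j) := by
    rw [← Finset.sum_add_distrib]
    exact Finset.sum_congr rfl fun j _ => by split_ifs <;> ring
  have r3 : ∑ j : Fin d, (if (j : ℕ) < ℓ then 0 else σ j ^ 2 * c j)
      ≤ sl ^ 2 * ∑ j : Fin d, (if (j : ℕ) < ℓ then 0 else c j) := by
    rw [Finset.mul_sum]
    apply Finset.sum_le_sum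
    intro j _
    split_ifs with hj
    · simp
    · have hjs : σ j ≤ sl := by
        rw [hsldef]
        exact hσmono (by simp [Fin.le_def]; omega)
      exact mul_le_mul_of_nonneg_right (pow_le_pow_left₀ (hσpos j) hjs 2) (hc0 j)
  -- the gap-weighted sum
  have e1 : ∑ j : Fin d, (if (j : ℕ) < ℓ then σ j ^ 2 - sl ^ 2 else 0) * (1 - c j)
      = (∑ j : Fin d, (if (j : ℕ) < ℓ then σ j ^ 2 else 0))
        - (∑ j : Fin d, (if (j : ℕ) < ℓ then σ j ^ 2 * c j else 0))
        - sl ^ 2 * ((∑ j : Fin d, (if (j : ℕ) < ℓ then (1 : ℝ) else 0))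
          - ∑ j : Fin d, (if (j : ℕ) < ℓ then c j else 0)) := by
    simp only [Finset.mul_sum, ← Finset.sum_sub_distrib]
    exact Finset.sum_congr rfl fun j _ => by split_ifs <;> ring
  have key : ∑ j : Fin d, (if (j : ℕ) < ℓ then σ j ^ 2 - sl ^ 2 else 0) * (1 - c j)
      ≤ ℓ * δ * σk ^ 2 := by
    have r5 : sl ^ 2 * (∑ j : Fin d, (if (j : ℕ) < ℓ then 0 else c j))
        ≤ sl ^ 2 * ((∑ j : Fin d, (if (j : ℕ) < ℓ then (1 : ℝ) else 0))
          - ∑ j : Fin d, (if (j : ℕ) < ℓ then c j else 0)) := by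
      apply mul_le_mul_of_nonneg_left _ (sq_nonneg sl)
      rw [hone]
      linarith [e3 ▸ hsumc]
    linarith [e1, hF1, e2, r3, r5]
  -- pointwise comparison with the constant C = t²/(t²−sl²)
  have hptw : ∑ j : Fin d, (if (j : ℕ) < ℓ then σ j ^ 2 else 0) * (1 - c j)
      ≤ t ^ 2 / (t ^ 2 - sl ^ 2)
        * ∑ j : Fin d, (if (j : ℕ) < ℓ then σ j ^ 2 - sl ^ 2 else 0) * (1 - c j) := by
    rw [Finset.mul_sum]
    apply Finset.sum_le_sum
    intro j _
    split_ifs with hj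
    · have htj : t ≤ σ j := by
        rw [htdef]
        exact hσmono (by simp [Fin.le_def]; omega)
      have h1c : 0 ≤ 1 - c j := by linarith [hc1 j]
      have h2 : σ j ^ 2 ≤ t ^ 2 / (t ^ 2 - sl ^ 2) * (σ j ^ 2 - sl ^ 2) := by
        rw [div_mul_eq_mul_div, le_div_iff₀ hC0]
        have ht2 : t ^ 2 ≤ σ j ^ 2 := pow_le_pow_left₀ hσℓ.le htj 2
        nlinarith [sq_nonneg sl, ht2]
      calc σ j ^ 2 * (1 - c j)
          ≤ (t ^ 2 / (t ^ 2 - sl ^ 2) * (σ j ^ 2 - sl ^ 2)) * (1 - c j) :=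
            mul_le_mul_of_nonneg_right h2 h1c
        _ = t ^ 2 / (t ^ 2 - sl ^ 2) * ((σ j ^ 2 - sl ^ 2) * (1 - c j)) := by ring
    · simp
  have hchain : t ^ 2 / (t ^ 2 - sl ^ 2)
      * (∑ j : Fin d, (if (j : ℕ) < ℓ then σ j ^ 2 - sl ^ 2 else 0) * (1 - c j))
      ≤ t ^ 2 / (t ^ 2 - sl ^ 2) * (ℓ * δ * σk ^ 2) :=
    mul_le_mul_of_nonneg_left key (by positivity)
  have hfin : t ^ 2 / (t ^ 2 - sl ^ 2) * (ℓ * δ * σk ^ 2)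
      = ℓ * δ * σk ^ 2 / (1 - (sl / t) ^ 2) := by
    rw [eq_div_iff (ne_of_gt hden)]
    field_simp
  linarith [hptw, hchain, hfin.le, hfin.ge]
end
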